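/- Let f(r) = 1 + (p_z + c·ln r)² + L²·r^{−2} on r > 0, where c = (μ₀/(2π))·I₀ > 0 and L > 0. Then f has a unique critical point r̄ > 0, f is strictly decreasing on (0, r̄) and strictly increasing on (r̄, ∞), and f attains a global minimum at r̄. -/

import Mathlib

open Real Set

theorem f_unique_min (c L p_z : ℝ) (hc : 0 < c) (hL : 0 < L) (f : ℝ → ℝ)
    (hdef : ∀ r > 0, f r = 1 + (p_z + c * Real.log r)^2 + L^2 / r^2) :
    ∃ rbar : ℝ, 0 < rbar ∧
      (∀ r > 0, deriv f r = 0 ↔ r = rbar) ∧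
      StrictAntiOn f (Set.Ioc 0 rbar) ∧
      StrictMonoOn f (Set.Ici rbar) ∧
      (∀ r > 0, f rbar ≤ f r) := by
  set r0 : ℝ := Real.exp (-p_z / c) with hr0def
  have hr0 : 0 < r0 := Real.exp_pos _
  set h : ℝ → ℝ := fun r => c * r ^ 2 * (p_z + c * Real.log r) - L ^ 2 with hh
  have hur0 : p_z + c * Real.log r0 = 0 := by
    rw [hr0def, Real.log_exp]
    field_simp
    ring
  have humono : ∀ a b : ℝ, 0 < a → a < b →
      p_z + c * Real.log a < p_z + c * Real.log b := by
    intro a b ha hab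
    have := Real.log_lt_log ha hab
    nlinarith
  have hu_nonneg : ∀ r, r0 ≤ r → 0 ≤ p_z + c * Real.log r := by
    intro r hr
    rcases eq_or_lt_of_le hr with rfl | hlt
    · exact hur0.ge
    · exact (hur0 ▸ humono r0 r hr0 hlt).le
  -- h is strictly monotone on [r0, ∞)
  have hmono : StrictMonoOn h (Set.Ici r0) := by
    intro a ha b hb hab
    simp only [hh]
    have ha0 : 0 < a := lt_of_lt_of_le hr0 ha
    have hua : 0 ≤ p_z + c * Real.log a := hu_nonneg a ha
    have hub : p_z + c * Real.log a < p_z + c * Real.log b := humono a b ha0 hab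
    have h1 : a ^ 2 < b ^ 2 := by nlinarith
    have ubpos : 0 < p_z + c * Real.log b := lt_of_le_of_lt hua hub
    have k1 : c * a ^ 2 * (p_z + c * Real.log a) ≤ c * a ^ 2 * (p_z + c * Real.log b) :=
      mul_le_mul_of_nonneg_left hub.le (by positivity)
    have k2 : c * a ^ 2 * (p_z + c * Real.log b) < c * b ^ 2 * (p_z + c * Real.log b) :=
      mul_lt_mul_of_pos_right (by nlinarith) ubpos
    linarith
  -- h is negative on (0, r0]
  have hneg : ∀ r, 0 < r → r ≤ r0 → h r < 0 := by
    intro r hr hrr0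
    have : p_z + c * Real.log r ≤ 0 := by
      rcases eq_or_lt_of_le hrr0 with rfl | hlt
      · exact hur0.le
      · exact (hur0 ▸ humono r r0 hr hlt).le
    have := mul_nonpos_of_nonneg_of_nonpos (le_of_lt (mul_pos hc (pow_pos hr 2))) this
    simp only [hh]; nlinarith
  -- choose M with h M > 0
  set M : ℝ := max (Real.exp ((1 - p_z) / c)) (Real.sqrt (L ^ 2 / c) + 1) with hMdef
  have hM1 : 1 ≤ p_z + c * Real.log M := by
    have h1 : Real.exp ((1 - p_z) / c) ≤ M := le_max_left _ _
    have h2 : (1 - p_z) / c ≤ Real.log M := by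
      rw [← Real.log_exp ((1 - p_z) / c)]
      exact Real.log_le_log (Real.exp_pos _) h1
    have := (div_le_iff₀ hc).mp h2
    nlinarith
  have hMpos : 0 < M := lt_of_lt_of_le (Real.exp_pos _) (le_max_left _ _)
  have hM2 : L ^ 2 < c * M ^ 2 := by
    have hs : Real.sqrt (L ^ 2 / c) + 1 ≤ M := le_max_right _ _
    have hsq : Real.sqrt (L ^ 2 / c) ^ 2 = L ^ 2 / c :=
      Real.sq_sqrt (by positivity)
    have h0 : 0 ≤ Real.sqrt (L ^ 2 / c) := Real.sqrt_nonneg _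
    have : L ^ 2 / c < M ^ 2 := by nlinarith
    calc L ^ 2 = c * (L ^ 2 / c) := by field_simp
    _ < c * M ^ 2 := by exact (mul_lt_mul_iff_right₀ hc).mpr this
  have hMr0 : r0 < M := by
    by_contra hcon
    push_neg at hcon
    rcases eq_or_lt_of_le hcon with heq | hlt
    · rw [heq, hur0] at hM1; linarith
    · have := humono M r0 hMpos hlt
      rw [hur0] at this; linarith
  have hhM : 0 < h M := by
    simp only [hh]
    nlinarith [mul_pos hc (pow_pos hMpos 2)]
  -- continuity of h on Ici r0
  have hcont : ContinuousOn h (Set.Icc r0 M) := by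
    apply ContinuousOn.sub _ continuousOn_const
    apply ContinuousOn.mul (by fun_prop)
    apply ContinuousOn.add continuousOn_const
    apply ContinuousOn.mul continuousOn_const
    exact Real.continuousOn_log.mono (fun x hx => by
      have : 0 < x := lt_of_lt_of_le hr0 hx.1
      simp [this.ne'])
  -- IVT to find rbar
  obtain ⟨rbar, hrbarmem, hrbar0⟩ :=
    intermediate_value_Icc hMr0.le hcont
      (show (0 : ℝ) ∈ Set.Icc (h r0) (h M) from
        ⟨(hneg r0 hr0 le_rfl).le, hhM.le⟩)
  have hrbarpos : 0 < rbar := lt_of_lt_of_le hr0 hrbarmem.1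
  have hrbar_gt : r0 < rbar := by
    rcases eq_or_lt_of_le hrbarmem.1 with heq | hlt
    · rw [← heq] at hrbar0
      exact absurd hrbar0 (hneg r0 hr0 le_rfl).ne
    · exact hlt
  -- h r < 0 for 0 < r < rbar
  have hhneg : ∀ r, 0 < r → r < rbar → h r < 0 := by
    intro r hr hrb
    rcases le_or_gt r r0 with hle | hgt
    · exact hneg r hr hle
    · calc h r < h rbar := hmono hgt.le hrbarmem.1 hrb
      _ = 0 := hrbar0
  have hhpos : ∀ r, rbar < r → 0 < h r := by
    intro r hrb
    calc (0:ℝ) = h rbar := hrbar0.symm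
    _ < h r := hmono hrbarmem.1 (le_trans hrbarmem.1 hrb.le) hrb
  -- derivative of f
  have hfd : ∀ r : ℝ, 0 < r → HasDerivAt f (2 * h r / r ^ 3) r := by
    intro r hr
    have hne : r ≠ 0 := hr.ne'
    have h1 : HasDerivAt (fun x : ℝ => (p_z + c * Real.log x) ^ 2)
        (2 * (p_z + c * Real.log r) ^ 1 * (c * r⁻¹)) r := by
      exact (((Real.hasDerivAt_log hne).const_mul c).const_add p_z).pow 2
    have h2 : HasDerivAt (fun x : ℝ => L ^ 2 / x ^ 2)
        ((0 * r ^ 2 - L ^ 2 * (2 * r ^ 1)) / (r ^ 2) ^ 2) r := by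
      exact (hasDerivAt_const r (L ^ 2)).div (hasDerivAt_pow 2 r) (by positivity)
    have h3 : HasDerivAt (fun x : ℝ => 1 + (p_z + c * Real.log x) ^ 2 + L ^ 2 / x ^ 2)
        (2 * (p_z + c * Real.log r) ^ 1 * (c * r⁻¹) +
          (0 * r ^ 2 - L ^ 2 * (2 * r ^ 1)) / (r ^ 2) ^ 2) r :=
      (h1.const_add 1).add h2
    have heq : f =ᶠ[nhds r] fun x => 1 + (p_z + c * Real.log x) ^ 2 + L ^ 2 / x ^ 2 := by
      filter_upwards [IsOpen.mem_nhds isOpen_Ioi hr] with x hx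
      exact hdef x hx
    have h4 := h3.congr_of_eventuallyEq heq
    convert h4 using 1
    · rfl
    · rfl
    simp only [hh]
    field_simp
    ring
  have hderiv : ∀ r : ℝ, 0 < r → deriv f r = 2 * h r / r ^ 3 := fun r hr =>
    (hfd r hr).deriv
  -- continuity of f on (0, ∞)
  have hfc : ∀ r : ℝ, 0 < r → ContinuousAt f r := fun r hr =>
    (hfd r hr).continuousAt
  refine ⟨rbar, hrbarpos, ?_, ?_, ?_, ?_⟩
  · -- critical points
    intro r hr
    rw [hderiv r hr]
    constructor
    · intro h0
      have hr3 : (0:ℝ) < r ^ 3 := by positivity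
      have hhr : h r = 0 := by
        field_simp at h0
        linarith
      by_contra hne
      rcases lt_or_gt_of_ne hne with hlt | hgt
      · exact absurd hhr (hhneg r hr hlt).ne
      · exact absurd hhr (hhpos r hgt).ne'
    · rintro rfl
      rw [hrbar0]; ring
  · -- strict anti on Ioc 0 rbar
    apply strictAntiOn_of_deriv_neg (convex_Ioc 0 rbar)
    · exact fun x hx => (hfc x hx.1).continuousWithinAt
    · intro x hx
      rw [interior_Ioc] at hx
      rw [hderiv x hx.1]
      have := hhneg x hx.1 hx.2
      have hx3 : (0:ℝ) < x ^ 3 := pow_pos hx.1 3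
      exact div_neg_of_neg_of_pos (by linarith) hx3
  · -- strict mono on Ici rbar
    apply strictMonoOn_of_deriv_pos (convex_Ici rbar)
    · exact fun x hx => (hfc x (lt_of_lt_of_le hrbarpos hx)).continuousWithinAt
    · intro x hx
      rw [interior_Ici] at hx
      have hx0 : 0 < x := lt_trans hrbarpos hx
      rw [hderiv x hx0]
      exact div_pos (by linarith [hhpos x hx]) (pow_pos hx0 3)
  · -- global min
    intro r hr
    rcases lt_trichotomy r rbar with hlt | rfl | hgt
    · have hanti : StrictAntiOn f (Set.Ioc 0 rbar) := by
        apply strictAntiOn_of_deriv_neg (convex_Ioc 0 rbar)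
        · exact fun x hx => (hfc x hx.1).continuousWithinAt
        · intro x hx
          rw [interior_Ioc] at hx
          rw [hderiv x hx.1]
          have := hhneg x hx.1 hx.2
          have hx3 : (0:ℝ) < x ^ 3 := pow_pos hx.1 3
          exact div_neg_of_neg_of_pos (by linarith) hx3
      exact (hanti ⟨hr, hlt.le⟩ ⟨hrbarpos, le_rfl⟩ hlt).le
    · exact le_refl _
    · have hmonof : StrictMonoOn f (Set.Ici rbar) := by
        apply strictMonoOn_of_deriv_pos (convex_Ici rbar)
        · exact fun x hx => (hfc x (lt_of_lt_of_le hrbarpos hx)).continuousWithinAt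
        · intro x hx
          rw [interior_Ici] at hx
          have hx0 : 0 < x := lt_trans hrbarpos hx
          rw [hderiv x hx0]
          exact div_pos (by linarith [hhpos x hx]) (pow_pos hx0 3)
      exact (hmonof self_mem_Ici hgt.le hgt).le
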